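/- Let β > 0 and define, for paths x, y : ℝ → ℝ^P, the weighted inner product ⟨x,y⟩_β = ∫_{−∞}^{∞} e^{−2βt} x(t)ᵀ y(t) dt and norm ‖x‖_β² = ⟨x,x⟩_β. Let x, y be differentiable paths such that ‖x‖_β, ‖y‖_β, ‖ẋ‖_β, ‖ẏ‖_β are all finite and e^{−2βt} ‖x(t)‖ ‖y(t)‖ → 0 as t → ±∞ (and likewise e^{−2βt}‖x(t)‖² → 0). Then: (1) ⟨x, ẏ⟩_β = 2β ⟨x, y⟩_β − ⟨ẋ, y⟩_β; (2) ⟨x, ẋ⟩_β = β ‖x‖_β²; (3) ‖x‖_β ≤ (1/β) ‖ẋ‖_β. -/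

import Mathlib

open MeasureTheory Filter

noncomputable section

private lemma integ_inner {P : ℕ} {β : ℝ} {f g : ℝ → EuclideanSpace ℝ (Fin P)}
    (hf : AEStronglyMeasurable f (volume : Measure ℝ))
    (hg : AEStronglyMeasurable g (volume : Measure ℝ))
    (hfI : Integrable fun t : ℝ => Real.exp (-2 * β * t) * ‖f t‖ ^ 2)
    (hgI : Integrable fun t : ℝ => Real.exp (-2 * β * t) * ‖g t‖ ^ 2) :
    Integrable fun t : ℝ => Real.exp (-2 * β * t) * (inner ℝ (f t) (g t) : ℝ) := by
  apply Integrable.mono ((hfI.add hgI).div_const 2)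
  · exact ((Real.continuous_exp.comp (continuous_const.mul continuous_id)).aestronglyMeasurable).mul
      (hf.inner hg)
  · filter_upwards with t
    have h1 : |(inner ℝ (f t) (g t) : ℝ)| ≤ ‖f t‖ * ‖g t‖ := abs_real_inner_le_norm _ _
    have he : (0:ℝ) ≤ Real.exp (-2 * β * t) := (Real.exp_pos _).le
    have h2 : ‖f t‖ * ‖g t‖ ≤ (‖f t‖ ^ 2 + ‖g t‖ ^ 2) / 2 := by
      nlinarith [sq_nonneg (‖f t‖ - ‖g t‖)]
    have h3 : (0:ℝ) ≤ (Real.exp (-2 * β * t) * ‖f t‖ ^ 2 + Real.exp (-2 * β * t) * ‖g t‖ ^ 2) / 2 := by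
      positivity
    simp only [Pi.add_apply, Real.norm_eq_abs, abs_mul, abs_of_nonneg he, abs_of_nonneg h3]
    nlinarith [mul_le_mul_of_nonneg_left h1 he, mul_le_mul_of_nonneg_left h2 he]

private lemma aux_ibp {P : ℕ} {β : ℝ}
    (x y x' y' : ℝ → EuclideanSpace ℝ (Fin P))
    (hx : ∀ t, HasDerivAt x (x' t) t) (hy : ∀ t, HasDerivAt y (y' t) t)
    (hxI : Integrable fun t : ℝ => Real.exp (-2 * β * t) * ‖x t‖ ^ 2)
    (hyI : Integrable fun t : ℝ => Real.exp (-2 * β * t) * ‖y t‖ ^ 2)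
    (hx'I : Integrable fun t : ℝ => Real.exp (-2 * β * t) * ‖x' t‖ ^ 2)
    (hy'I : Integrable fun t : ℝ => Real.exp (-2 * β * t) * ‖y' t‖ ^ 2)
    (hxyTop : Tendsto (fun t : ℝ => Real.exp (-2 * β * t) * (‖x t‖ * ‖y t‖)) atTop (nhds 0))
    (hxyBot : Tendsto (fun t : ℝ => Real.exp (-2 * β * t) * (‖x t‖ * ‖y t‖)) atBot (nhds 0)) :
    (∫ t : ℝ, Real.exp (-2 * β * t) * (inner ℝ (x t) (y' t) : ℝ)) =
        2 * β * (∫ t : ℝ, Real.exp (-2 * β * t) * (inner ℝ (x t) (y t) : ℝ)) -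
          (∫ t : ℝ, Real.exp (-2 * β * t) * (inner ℝ (x' t) (y t) : ℝ)) := by
  have hxc : Continuous x := continuous_iff_continuousAt.2 fun t => (hx t).continuousAt
  have hyc : Continuous y := continuous_iff_continuousAt.2 fun t => (hy t).continuousAt
  have hxm := hxc.aestronglyMeasurable (μ := (volume : Measure ℝ))
  have hym := hyc.aestronglyMeasurable (μ := (volume : Measure ℝ))
  have hx'm : AEStronglyMeasurable x' (volume : Measure ℝ) := by
    have : x' = deriv x := funext fun t => ((hx t).deriv).symm
    rw [this]
    exact (stronglyMeasurable_deriv x).aestronglyMeasurable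
  have hy'm : AEStronglyMeasurable y' (volume : Measure ℝ) := by
    have : y' = deriv y := funext fun t => ((hy t).deriv).symm
    rw [this]
    exact (stronglyMeasurable_deriv y).aestronglyMeasurable
  have I1 := integ_inner hxm hy'm hxI hy'I
  have I2 := integ_inner hxm hym hxI hyI
  have I3 := integ_inner hx'm hym hx'I hyI
  have Ia : Integrable (fun t : ℝ =>
      (-2 * β) * (Real.exp (-2 * β * t) * (inner ℝ (x t) (y t) : ℝ))) := I2.const_mul _
  have Ibc : Integrable (fun t : ℝ =>
      Real.exp (-2 * β * t) * (inner ℝ (x t) (y' t) : ℝ) +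
        Real.exp (-2 * β * t) * (inner ℝ (x' t) (y t) : ℝ)) := I1.add I3
  have hderiv : ∀ t : ℝ, HasDerivAt (fun s => Real.exp (-2 * β * s) * (inner ℝ (x s) (y s) : ℝ))
      ((-2 * β) * (Real.exp (-2 * β * t) * (inner ℝ (x t) (y t) : ℝ)) +
        (Real.exp (-2 * β * t) * (inner ℝ (x t) (y' t) : ℝ) +
          Real.exp (-2 * β * t) * (inner ℝ (x' t) (y t) : ℝ))) t := by
    intro t
    have h1 : HasDerivAt (fun t : ℝ => -2 * β * t) (-2 * β) t := by
      simpa using (hasDerivAt_id t).const_mul (-2 * β)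
    have he : HasDerivAt (fun t : ℝ => Real.exp (-2 * β * t))
        (Real.exp (-2 * β * t) * (-2 * β)) t := h1.exp
    have hi : HasDerivAt (fun t => (inner ℝ (x t) (y t) : ℝ))
        ((inner ℝ (x t) (y' t) : ℝ) + (inner ℝ (x' t) (y t) : ℝ)) t :=
      (hx t).inner ℝ (hy t)
    exact (he.mul hi).congr_deriv (by ring)
  have hint : Integrable (fun t : ℝ =>
      (-2 * β) * (Real.exp (-2 * β * t) * (inner ℝ (x t) (y t) : ℝ)) +
        (Real.exp (-2 * β * t) * (inner ℝ (x t) (y' t) : ℝ) +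
          Real.exp (-2 * β * t) * (inner ℝ (x' t) (y t) : ℝ))) := Ia.add Ibc
  have hnorm : ∀ t : ℝ, ‖Real.exp (-2 * β * t) * (inner ℝ (x t) (y t) : ℝ)‖ ≤
      Real.exp (-2 * β * t) * (‖x t‖ * ‖y t‖) := by
    intro t
    rw [Real.norm_eq_abs, abs_mul, abs_of_nonneg (Real.exp_pos _).le]
    exact mul_le_mul_of_nonneg_left (abs_real_inner_le_norm _ _) (Real.exp_pos _).le
  have htop : Tendsto (fun t : ℝ => Real.exp (-2 * β * t) * (inner ℝ (x t) (y t) : ℝ))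
      atTop (nhds 0) := squeeze_zero_norm hnorm hxyTop
  have hbot : Tendsto (fun t : ℝ => Real.exp (-2 * β * t) * (inner ℝ (x t) (y t) : ℝ))
      atBot (nhds 0) := squeeze_zero_norm hnorm hxyBot
  have hzero := integral_of_hasDerivAt_of_tendsto hderiv hint hbot htop
  rw [sub_zero, integral_add Ia Ibc, integral_add I1 I3, integral_const_mul] at hzero
  linarith

theorem weighted_norm_identities_exponential
    (P : ℕ) (β : ℝ) (hβ : 0 < β)
    (x y x' y' : ℝ → EuclideanSpace ℝ (Fin P))
    (hx : ∀ t, HasDerivAt x (x' t) t) (hy : ∀ t, HasDerivAt y (y' t) t)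
    (hxI : Integrable fun t : ℝ => Real.exp (-2 * β * t) * ‖x t‖ ^ 2)
    (hyI : Integrable fun t : ℝ => Real.exp (-2 * β * t) * ‖y t‖ ^ 2)
    (hx'I : Integrable fun t : ℝ => Real.exp (-2 * β * t) * ‖x' t‖ ^ 2)
    (hy'I : Integrable fun t : ℝ => Real.exp (-2 * β * t) * ‖y' t‖ ^ 2)
    (hxyTop : Tendsto (fun t : ℝ => Real.exp (-2 * β * t) * (‖x t‖ * ‖y t‖)) atTop (nhds 0))
    (hxyBot : Tendsto (fun t : ℝ => Real.exp (-2 * β * t) * (‖x t‖ * ‖y t‖)) atBot (nhds 0))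
    (hxxTop : Tendsto (fun t : ℝ => Real.exp (-2 * β * t) * ‖x t‖ ^ 2) atTop (nhds 0))
    (hxxBot : Tendsto (fun t : ℝ => Real.exp (-2 * β * t) * ‖x t‖ ^ 2) atBot (nhds 0)) :
    (∫ t : ℝ, Real.exp (-2 * β * t) * (inner ℝ (x t) (y' t) : ℝ)) =
        2 * β * (∫ t : ℝ, Real.exp (-2 * β * t) * (inner ℝ (x t) (y t) : ℝ)) -
          (∫ t : ℝ, Real.exp (-2 * β * t) * (inner ℝ (x' t) (y t) : ℝ)) ∧
    (∫ t : ℝ, Real.exp (-2 * β * t) * (inner ℝ (x t) (x' t) : ℝ)) =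
        β * (∫ t : ℝ, Real.exp (-2 * β * t) * ‖x t‖ ^ 2) ∧
    Real.sqrt (∫ t : ℝ, Real.exp (-2 * β * t) * ‖x t‖ ^ 2) ≤
        (1 / β) * Real.sqrt (∫ t : ℝ, Real.exp (-2 * β * t) * ‖x' t‖ ^ 2) := by
  have part1 := aux_ibp x y x' y' hx hy hxI hyI hx'I hy'I hxyTop hxyBot
  have hxxTop' : Tendsto (fun t : ℝ => Real.exp (-2 * β * t) * (‖x t‖ * ‖x t‖)) atTop (nhds 0) := by
    simpa [pow_two] using hxxTop
  have hxxBot' : Tendsto (fun t : ℝ => Real.exp (-2 * β * t) * (‖x t‖ * ‖x t‖)) atBot (nhds 0) := by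
    simpa [pow_two] using hxxBot
  have h2 := aux_ibp x x x' x' hx hx hxI hxI hx'I hx'I hxxTop' hxxBot'
  have hsym : (∫ t : ℝ, Real.exp (-2 * β * t) * (inner ℝ (x' t) (x t) : ℝ)) =
      (∫ t : ℝ, Real.exp (-2 * β * t) * (inner ℝ (x t) (x' t) : ℝ)) := by
    congr 1; funext t; rw [real_inner_comm]
  have hself : (∫ t : ℝ, Real.exp (-2 * β * t) * (inner ℝ (x t) (x t) : ℝ)) =
      (∫ t : ℝ, Real.exp (-2 * β * t) * ‖x t‖ ^ 2) := by
    congr 1; funext t; rw [real_inner_self_eq_norm_sq]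
  rw [hsym, hself] at h2
  have part2 : (∫ t : ℝ, Real.exp (-2 * β * t) * (inner ℝ (x t) (x' t) : ℝ)) =
      β * (∫ t : ℝ, Real.exp (-2 * β * t) * ‖x t‖ ^ 2) := by linarith
  refine ⟨part1, part2, ?_⟩
  set N := ∫ t : ℝ, Real.exp (-2 * β * t) * ‖x t‖ ^ 2 with hN
  set M := ∫ t : ℝ, Real.exp (-2 * β * t) * ‖x' t‖ ^ 2 with hM
  have hxc : Continuous x := continuous_iff_continuousAt.2 fun t => (hx t).continuousAt
  have hx'm : AEStronglyMeasurable x' (volume : Measure ℝ) := by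
    have : x' = deriv x := funext fun t => ((hx t).deriv).symm
    rw [this]
    exact (stronglyMeasurable_deriv x).aestronglyMeasurable
  have Iinner := integ_inner (hxc.aestronglyMeasurable) hx'm hxI hx'I
  have hbound : (∫ t : ℝ, Real.exp (-2 * β * t) * (inner ℝ (x t) (x' t) : ℝ)) ≤
      ∫ t : ℝ, ((β / 2) * (Real.exp (-2 * β * t) * ‖x t‖ ^ 2) +
        (1 / (2 * β)) * (Real.exp (-2 * β * t) * ‖x' t‖ ^ 2)) := by
    apply integral_mono Iinner ((hxI.const_mul (β / 2)).add (hx'I.const_mul (1 / (2 * β))))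
    intro t
    have he : (0:ℝ) ≤ Real.exp (-2 * β * t) := (Real.exp_pos _).le
    have h1 : (inner ℝ (x t) (x' t) : ℝ) ≤ ‖x t‖ * ‖x' t‖ := real_inner_le_norm _ _
    have h2 : ‖x t‖ * ‖x' t‖ ≤ (β / 2) * ‖x t‖ ^ 2 + (1 / (2 * β)) * ‖x' t‖ ^ 2 := by
      have heq : (β / 2) * ‖x t‖ ^ 2 + (1 / (2 * β)) * ‖x' t‖ ^ 2 =
          (β ^ 2 * ‖x t‖ ^ 2 + ‖x' t‖ ^ 2) / (2 * β) := by
        field_simp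
      rw [heq, le_div_iff₀ (by positivity)]
      nlinarith [sq_nonneg (β * ‖x t‖ - ‖x' t‖)]
    have := mul_le_mul_of_nonneg_left (h1.trans h2) he
    calc Real.exp (-2 * β * t) * (inner ℝ (x t) (x' t) : ℝ)
        ≤ Real.exp (-2 * β * t) * ((β / 2) * ‖x t‖ ^ 2 + (1 / (2 * β)) * ‖x' t‖ ^ 2) := this
      _ = (β / 2) * (Real.exp (-2 * β * t) * ‖x t‖ ^ 2) +
          (1 / (2 * β)) * (Real.exp (-2 * β * t) * ‖x' t‖ ^ 2) := by ring
  rw [integral_add (hxI.const_mul (β / 2)) (hx'I.const_mul (1 / (2 * β))),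
    integral_const_mul, integral_const_mul, part2] at hbound
  rw [← hN, ← hM] at hbound
  have hNM : N ≤ M / β ^ 2 := by
    have hb2 : (0:ℝ) < β ^ 2 := by positivity
    rw [le_div_iff₀ hb2]
    have h' := mul_le_mul_of_nonneg_left hbound (by positivity : (0:ℝ) ≤ 2 * β)
    have heq : 2 * β * (β / 2 * N + 1 / (2 * β) * M) = β ^ 2 * N + M := by
      field_simp
    nlinarith [h', heq]
  calc Real.sqrt N ≤ Real.sqrt (M / β ^ 2) := Real.sqrt_le_sqrt hNM
    _ = (1 / β) * Real.sqrt M := by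
        rw [show M / β ^ 2 = (1 / β) ^ 2 * M by field_simp,
          Real.sqrt_mul (sq_nonneg _), Real.sqrt_sq (by positivity : (0:ℝ) ≤ 1 / β)]
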